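/- (Green's theorem) Let c : ℕ×ℕ → ℂ be finitely supported and let a := Σ_{(n,m)} c(n,m) (U*)ⁿUᵐ. Then a is scalable, the operator ∂̄(a) = δ̄∘a − J(a)∘δ̄ defined on 𝒟 extends to a bounded operator b on H, and ∫_{D_q} b = (1/(2πi)) ∮_{|ζ|=1} (Σ_{(n,m)} c(n,m) ζ^{m−n}) dζ, where the right-hand side is the contour integral over the positively oriented unit circle of the symbol function σ(a)(ζ) = Σ_{(n,m)} c(n,m) ζ̄ⁿζᵐ (for |ζ| = 1). -/

import Mathlib

open MeasureTheory InnerProductSpace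

noncomputable section
set_option maxHeartbeats 2000000
set_option linter.unusedSectionVars false

/-- `H = ℓ²(ℕ, ℂ)`. -/
abbrev H : Type := lp (fun _ : ℕ => ℂ) 2

/-- The standard orthonormal basis `e n` of `ℓ²(ℕ, ℂ)`. -/
noncomputable def e (n : ℕ) : H := lp.single 2 n 1

/-- The operator `δ̄`, defined on `𝒟 = range j` by `δ̄(jψ) = q⁻¹(q−1)⁻¹ Uψ`. -/
noncomputable def dbar (q : ℝ) (U j : H →L[ℂ] H) (φ : H) : H :=
  ((q : ℂ)⁻¹ * ((q : ℂ) - 1)⁻¹) • U (Function.invFun (⇑j) φ)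

/-- The integral `∫_{D_q} a = (1−q) Σ_k q^k ⟨e_k, a e_k⟩`. -/
noncomputable def intDq (q : ℝ) (a : H →L[ℂ] H) : ℂ :=
  ((1 - q : ℝ) : ℂ) * ∑' k : ℕ, ((q : ℂ) ^ k) * (inner ℂ (e k) (a (e k)) : ℂ)

lemma inner_e (i : ℕ) (f : H) : (inner ℂ (e i) f : ℂ) = f i := by
  simp [e, lp.inner_single_left]

lemma ee (i l : ℕ) : (inner ℂ (e i) (e l) : ℂ) = if i = l then 1 else 0 := by
  rw [inner_e]; simp [e, lp.single_apply, Pi.single_apply]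

lemma vec_ext {x y : H} (h : ∀ i, (inner ℂ (e i) x : ℂ) = inner ℂ (e i) y) : x = y := by
  refine lp.ext (funext fun i => ?_)
  rw [← inner_e, ← inner_e, h i]

lemma op_ext {S T : H →L[ℂ] H} (h : ∀ n, S (e n) = T (e n)) : S = T := by
  ext1 x
  have hx : HasSum (fun i : ℕ => (x i : ℂ) • e i) x := by
    have h2 := lp.hasSum_single ENNReal.ofNat_ne_top x
    have : ∀ i : ℕ, lp.single 2 i (x i : ℂ) = (x i : ℂ) • e i := by
      intro i
      rw [e, ← lp.single_smul]
      norm_num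
    simpa [this] using h2
  have h1 : HasSum (fun i : ℕ => (x i : ℂ) • S (e i)) (S x) := by
    simpa [_root_.map_smul] using S.hasSum hx
  have h2 : HasSum (fun i : ℕ => (x i : ℂ) • T (e i)) (T x) := by
    simpa [_root_.map_smul] using T.hasSum hx
  simp only [h] at h1
  exact h1.unique h2

section Ops
variable {q : ℝ} (hq0 : 0 < q) (hq1 : q < 1) (U j : H →L[ℂ] H)
  (hU : ∀ n : ℕ, U (e n) = (Real.sqrt (1 - q ^ (n + 1)) : ℂ) • e (n + 1))
  (hj : ∀ n : ℕ, j (e n) = ((q : ℂ) ^ n) • e n)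

local notation "V" => ContinuousLinearMap.adjoint U

include hU in
lemma adj_zero : V (e 0) = 0 := by
  refine vec_ext fun i => ?_
  rw [ContinuousLinearMap.adjoint_inner_right, hU, inner_smul_left, ee]
  simp

include hU in
lemma adj_succ (n : ℕ) : V (e (n + 1)) = (Real.sqrt (1 - q ^ (n + 1)) : ℂ) • e n := by
  refine vec_ext fun i => ?_
  rw [ContinuousLinearMap.adjoint_inner_right, hU, inner_smul_left, ee,
    inner_smul_right, ee]
  rcases eq_or_ne i n with rfl | hne
  · simp [Complex.conj_ofReal]
  · simp [hne]

include hq0 hq1 hU hj in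
lemma jU : j * U = (q : ℂ) • (U * j) := by
  refine op_ext fun n => ?_
  simp only [ContinuousLinearMap.mul_apply, ContinuousLinearMap.smul_apply, hU, hj,
    _root_.map_smul]
  simp only [smul_smul]
  congr 1
  ring

include hq0 hq1 hU hj in
lemma Vj : V * j = (q : ℂ) • (j * V) := by
  refine op_ext fun n => ?_
  rcases n with _ | n
  · simp only [ContinuousLinearMap.mul_apply, ContinuousLinearMap.smul_apply, hj,
      _root_.map_smul, adj_zero U hU]
    simp
  · simp only [ContinuousLinearMap.mul_apply, ContinuousLinearMap.smul_apply, hj,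
      _root_.map_smul, adj_succ U hU]
    simp only [smul_smul]
    congr 1
    ring

include hq0 hq1 hU hj in
lemma VU : V * U = 1 - (q : ℂ) • j := by
  refine op_ext fun n => ?_
  have hnn : 0 ≤ 1 - q ^ (n + 1) := by
    have : q ^ (n + 1) ≤ 1 := pow_le_one₀ hq0.le hq1.le
    linarith
  simp only [ContinuousLinearMap.mul_apply, ContinuousLinearMap.sub_apply,
    ContinuousLinearMap.smul_apply, ContinuousLinearMap.one_apply, hU, _root_.map_smul,
    adj_succ U hU, hj]
  rw [smul_smul, ← Complex.ofReal_mul, Real.mul_self_sqrt hnn, smul_smul]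
  have hc : ((1 - q ^ (n+1) : ℝ) : ℂ) = 1 - (q:ℂ) * (q:ℂ) ^ n := by push_cast; ring
  rw [hc, sub_smul, one_smul]

include hq0 hq1 hU hj in
lemma UV : U * V = 1 - j := by
  refine op_ext fun n => ?_
  rcases n with _ | n
  · simp only [ContinuousLinearMap.mul_apply, ContinuousLinearMap.sub_apply,
      ContinuousLinearMap.one_apply, adj_zero U hU, hj]
    simp
  · have hnn : 0 ≤ 1 - q ^ (n + 1) := by
      have : q ^ (n + 1) ≤ 1 := pow_le_one₀ hq0.le hq1.le
      linarith
    simp only [ContinuousLinearMap.mul_apply, ContinuousLinearMap.sub_apply,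
      ContinuousLinearMap.one_apply, adj_succ U hU, _root_.map_smul, hU, hj]
    rw [smul_smul, ← Complex.ofReal_mul, Real.mul_self_sqrt hnn]
    have hc : ((1 - q ^ (n+1) : ℝ) : ℂ) = 1 - (q:ℂ) ^ (n+1) := by push_cast; ring
    rw [hc, sub_smul, one_smul]
end Ops

section Alg
variable {q : ℝ} (hq0 : 0 < q) (hq1 : q < 1) {A : Type*} [Ring A] [Algebra ℂ A]
  (U j V : A)
  (hjU : j * U = (q:ℂ) • (U * j))
  (hVj : V * j = (q:ℂ) • (j * V))
  (hVU : V * U = 1 - (q:ℂ) • j)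
  (hUV : U * V = 1 - j)

include hq0

lemma rc_ne : (q:ℂ) ≠ 0 := by
  simpa using hq0.ne'

include hq1 in
lemma rc_ne_one : (q:ℂ) ≠ 1 := by
  intro h
  rw [show (1:ℂ) = ((1:ℝ):ℂ) by norm_num, Complex.ofReal_inj] at h
  linarith

include hjU in
lemma jUpow (m : ℕ) : j * U^m = ((q:ℂ)^m) • (U^m * j) := by
  induction m with
  | zero => simp
  | succ m ih =>
    rw [pow_succ, ← mul_assoc, ih, smul_mul_assoc, mul_assoc, hjU, mul_smul_comm,
      smul_smul, ← mul_assoc, ← pow_succ]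

include hjU in
lemma Upowj (m : ℕ) : U^m * j = (((q:ℂ)^m)⁻¹) • (j * U^m) := by
  rw [jUpow hq0 U j hjU, smul_smul, inv_mul_cancel₀ (pow_ne_zero _ (rc_ne hq0)), one_smul]

include hVj in
lemma Vpowj (n : ℕ) : V^n * j = ((q:ℂ)^n) • (j * V^n) := by
  induction n with
  | zero => simp
  | succ n ih =>
    rw [pow_succ, mul_assoc, hVj, mul_smul_comm, ← mul_assoc, ih, smul_mul_assoc,
      smul_smul, mul_assoc, ← pow_succ']

include hVj in
lemma jV : j * V = ((q:ℂ)⁻¹) • (V * j) := by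
  rw [hVj, smul_smul, inv_mul_cancel₀ (rc_ne hq0), one_smul]

include hVU hUV in
lemma UVcomm : U * V = V * U + ((q:ℂ) - 1) • j := by
  rw [hUV, hVU]; module

include hVj hVU hUV in
lemma commV (s : ℕ) :
    U * V^(s+1) = V^(s+1) * U + (((q:ℂ)^(s+1) - 1) * ((q:ℂ)^s)⁻¹) • (V^s * j) := by
  induction s with
  | zero =>
    simpa using UVcomm hq0 U j V hVU hUV
  | succ s ih =>
    have h1 : U * V ^ (s+1+1) = (U * V^(s+1)) * V := by
      rw [pow_succ, ← mul_assoc]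
    rw [h1, ih, add_mul, smul_mul_assoc, mul_assoc (V^(s+1)) U V,
      UVcomm hq0 U j V hVU hUV, mul_add, mul_smul_comm, mul_assoc (V^s) j V,
      jV hq0 j V hVj, mul_smul_comm, ← mul_assoc (V^(s+1)) V U, ← pow_succ,
      ← mul_assoc (V^s) V j, ← pow_succ]
    rw [add_assoc, smul_smul, ← add_smul]
    congr 1
    have h2 : (q:ℂ) ≠ 0 := rc_ne hq0
    field_simp
    ring
include hjU hVj in
lemma monoJ (n m : ℕ) :
    (V^n * U^m) * j = ((q:ℂ)^n * ((q:ℂ)^m)⁻¹) • (j * (V^n * U^m)) := by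
  rw [mul_assoc, Upowj hq0 U j hjU m, mul_smul_comm, ← mul_assoc,
    Vpowj hq0 j V hVj n, smul_mul_assoc, smul_smul, mul_assoc, mul_comm ((q:ℂ)^m)⁻¹]

include hq1 hjU hVj hVU hUV in
lemma bmono (n m : ℕ) :
    (∑ i ∈ Finset.range n, (q:ℂ)^i) • ((V^(n-1) * U^m) * j)
      = ((q:ℂ)⁻¹ * ((q:ℂ)-1)⁻¹ * ((q:ℂ)^n * ((q:ℂ)^m)⁻¹)) •
        (U * (V^n*U^m) - (V^n*U^m) * U) := by
  cases n with
  | zero =>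
    simp only [Finset.range_zero, Finset.sum_empty, zero_smul, pow_zero, one_mul]
    rw [mul_assoc, ← pow_succ', ← pow_succ, sub_self, smul_zero]
  | succ s =>
    have hsub : U * (V^(s+1)*U^m) - (V^(s+1)*U^m) * U
        = ((((q:ℂ)^(s+1) - 1) * ((q:ℂ)^s)⁻¹) * ((q:ℂ)^m)) • ((V^s * U^m) * j) := by
      rw [← mul_assoc, commV hq0 U j V hVj hVU hUV s, add_mul, smul_mul_assoc,
        mul_assoc (V^(s+1)) U (U^m), ← pow_succ', mul_assoc (V^(s+1)) (U^m) U, ← pow_succ,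
        add_sub_cancel_left]
      rw [mul_assoc (V^s) j (U^m), jUpow hq0 U j hjU m, mul_smul_comm, smul_smul,
        ← mul_assoc]
    rw [hsub, smul_smul, Nat.add_sub_cancel]
    congr 1
    rw [geom_sum_eq (rc_ne_one hq0 hq1)]
    have h2 : (q:ℂ) ≠ 0 := rc_ne hq0
    have h3 : (q:ℂ) - 1 ≠ 0 := sub_ne_zero.2 (rc_ne_one hq0 hq1)
    field_simp
    ring
end Alg

section Ops2
set_option linter.unusedSectionVars false
variable {q : ℝ} (hq0 : 0 < q) (hq1 : q < 1) (U j : H →L[ℂ] H)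
  (hU : ∀ n : ℕ, U (e n) = (Real.sqrt (1 - q ^ (n + 1)) : ℂ) • e (n + 1))
  (hj : ∀ n : ℕ, j (e n) = ((q : ℂ) ^ n) • e n)

include hU in
lemma Upow_e (m k : ℕ) :
    (U^m) (e k) = ((∏ i ∈ Finset.range m, Real.sqrt (1 - q ^ (k + i + 1)) : ℝ) : ℂ) • e (k + m) := by
  induction m generalizing k with
  | zero => simp
  | succ m ih =>
    rw [pow_succ', ContinuousLinearMap.mul_apply, ih, _root_.map_smul, hU,
      smul_smul, ← Complex.ofReal_mul, Finset.prod_range_succ]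
    congr 1

include hq0 hq1 hU in
lemma diag_inner (s m k : ℕ) :
    (inner ℂ (e k) (((ContinuousLinearMap.adjoint U)^s * U^m) (e k)) : ℂ)
      = if s = m then ((∏ i ∈ Finset.range m, (1 - q ^ (k + i + 1)) : ℝ) : ℂ) else 0 := by
  have hadj : (ContinuousLinearMap.adjoint U)^s = ContinuousLinearMap.adjoint (U^s) := by
    rw [← ContinuousLinearMap.star_eq_adjoint, ← ContinuousLinearMap.star_eq_adjoint, ← star_pow]
  rw [ContinuousLinearMap.mul_apply, hadj, ContinuousLinearMap.adjoint_inner_right,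
    Upow_e U hU s k, Upow_e U hU m k, inner_smul_left, inner_smul_right, ee]
  rcases eq_or_ne s m with rfl | hne
  · rw [if_pos rfl, if_pos rfl, mul_one, Complex.conj_ofReal, ← Complex.ofReal_mul,
      Complex.ofReal_inj, ← Finset.prod_mul_distrib]
    refine Finset.prod_congr rfl fun i _ => ?_
    refine Real.mul_self_sqrt ?_
    have : q ^ (k + i + 1) ≤ 1 := pow_le_one₀ hq0.le hq1.le
    linarith
  · have : ¬ (k + s = k + m) := by omega
    simp [this, hne]

end Ops2

section Telescope
variable {q : ℝ} (hq0 : 0 < q) (hq1 : q < 1)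

include hq0 hq1 in
lemma telescope_hasSum (m : ℕ) :
    HasSum (fun k : ℕ => q ^ k * ∏ i ∈ Finset.range m, (1 - q ^ (k + i + 1)))
      ((1 - q ^ (m+1))⁻¹) := by
  set g : ℕ → ℝ := fun k => ∏ i ∈ Finset.range (m+1), (1 - q ^ (k + i)) with hg
  have hfac : ∀ k i : ℕ, 0 < k + i + 1 → 0 ≤ 1 - q ^ (k + i + 1) := fun k i _ => by
    have : q ^ (k + i + 1) ≤ 1 := pow_le_one₀ hq0.le hq1.le
    linarith
  have hne : (1 - q ^ (m+1)) ≠ 0 := by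
    have : q ^ (m+1) < 1 := pow_lt_one₀ hq0.le hq1 (by omega)
    linarith
  have hdiff : ∀ k : ℕ, g (k+1) - g k
      = (1 - q ^ (m+1)) * (q ^ k * ∏ i ∈ Finset.range m, (1 - q ^ (k + i + 1))) := by
    intro k
    have h1 : g (k+1) = (∏ i ∈ Finset.range m, (1 - q ^ (k + i + 1))) * (1 - q ^ (k + m + 1)) := by
      show (∏ i ∈ Finset.range (m+1), (1 - q ^ (k + 1 + i))) = _
      rw [Finset.prod_range_succ]
      congr 1
      · exact Finset.prod_congr rfl fun i _ => by rw [show k + 1 + i = k + i + 1 from by ring]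
      · rw [show k + 1 + m = k + m + 1 from by ring]
    have h2 : g k = (1 - q ^ k) * ∏ i ∈ Finset.range m, (1 - q ^ (k + i + 1)) := by
      show (∏ i ∈ Finset.range (m+1), (1 - q ^ (k + i))) = _
      rw [Finset.prod_range_succ', Nat.add_zero, mul_comm]
      exact congrArg (fun t => (1 - q ^ k) * t)
        (Finset.prod_congr rfl fun i _ => by rw [show k + (i + 1) = k + i + 1 from by ring])
    rw [h1, h2, pow_succ, pow_add]
    ring
  have hsummable : Summable (fun k : ℕ => q ^ k * ∏ i ∈ Finset.range m, (1 - q ^ (k + i + 1))) := by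
    refine Summable.of_nonneg_of_le (fun k => ?_) (fun k => ?_)
      (summable_geometric_of_lt_one hq0.le hq1)
    · exact mul_nonneg (pow_nonneg hq0.le k)
        (Finset.prod_nonneg fun i _ => hfac k i (by omega))
    · calc q ^ k * ∏ i ∈ Finset.range m, (1 - q ^ (k + i + 1))
          ≤ q ^ k * 1 := by
            refine mul_le_mul_of_nonneg_left ?_ (pow_nonneg hq0.le k)
            refine Finset.prod_le_one (fun i _ => hfac k i (by omega)) (fun i _ => ?_)
            have : 0 < q ^ (k + i + 1) := pow_pos hq0 _
            linarith
        _ = q ^ k := mul_one _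
  rw [hsummable.hasSum_iff_tendsto_nat]
  have hps : ∀ N : ℕ, ∑ k ∈ Finset.range N, q ^ k * ∏ i ∈ Finset.range m, (1 - q ^ (k + i + 1))
      = (1 - q ^ (m+1))⁻¹ * g N := by
    intro N
    have : ∑ k ∈ Finset.range N, (g (k+1) - g k) = g N - g 0 := Finset.sum_range_sub g N
    have hg0 : g 0 = 0 := by
      show (∏ i ∈ Finset.range (m+1), (1 - q ^ (0 + i))) = 0
      refine Finset.prod_eq_zero (Finset.mem_range.2 (by omega : (0:ℕ) < m + 1)) ?_
      norm_num
    rw [hg0, sub_zero] at this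
    rw [← this, Finset.mul_sum]
    refine Finset.sum_congr rfl fun k _ => ?_
    rw [hdiff k, ← mul_assoc, inv_mul_cancel₀ hne, one_mul]
  simp only [hps]
  have hgN : Filter.Tendsto g Filter.atTop (nhds 1) := by
    have : Filter.Tendsto (fun N => g N) Filter.atTop
        (nhds (∏ i ∈ Finset.range (m+1), (1 - 0 * q ^ i))) := by
      refine tendsto_finset_prod _ fun i _ => ?_
      refine Filter.Tendsto.const_sub _ ?_
      have : ∀ N, q ^ (N + i) = q ^ N * q ^ i := fun N => pow_add q N i
      simp only [this]
      exact (tendsto_pow_atTop_nhds_zero_of_lt_one hq0.le hq1).mul_const _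
    simpa using this
  have := hgN.const_mul ((1 - q ^ (m+1))⁻¹)
  simpa using this

end Telescope

section Circ
open Real Complex

lemma circInt_zpow (d : ℤ) :
    (∮ ζ in C((0:ℂ), 1), ζ ^ d) = if d = -1 then 2 * Real.pi * Complex.I else 0 := by
  rcases eq_or_ne d (-1) with rfl | hd
  · rw [if_pos rfl]
    have := circleIntegral.integral_sub_center_inv (0:ℂ) (one_ne_zero)
    simpa [zpow_neg_one] using this
  · rw [if_neg hd]
    have := circleIntegral.integral_sub_zpow_of_ne hd (0:ℂ) (0:ℂ) 1
    simpa using this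

lemma circInt_zpow_integrable (d : ℤ) : CircleIntegrable (fun ζ : ℂ => ζ ^ d) 0 1 := by
  have := (circleIntegrable_sub_zpow_iff (c := (0:ℂ)) (w := (0:ℂ)) (R := 1) (n := d)).2
  simp only [sub_zero] at this
  apply this
  right; right
  simp

lemma circInt_sum {s : Finset (ℕ × ℕ)} (c : ℕ × ℕ → ℂ) :
    (∮ ζ in C((0:ℂ), 1), ∑ p ∈ s, c p * ζ ^ ((p.2 : ℤ) - p.1))
      = ∑ p ∈ s, c p * (∮ ζ in C((0:ℂ), 1), ζ ^ ((p.2 : ℤ) - p.1)) := by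
  have h1 : ∀ p ∈ s, CircleIntegrable (fun ζ : ℂ => c p * ζ ^ ((p.2 : ℤ) - p.1)) 0 1 :=
    fun p _ => (circInt_zpow_integrable _).const_mul _
  rw [circleIntegral]
  simp only [Finset.smul_sum]
  rw [intervalIntegral.integral_finset_sum (fun p hp => (h1 p hp).out)]
  refine Finset.sum_congr rfl fun p hp => ?_
  rw [← circleIntegral.integral_const_mul]
  rfl
end Circ

/-- (Green's theorem) For a noncommutative polynomial `a = Σ c(n,m) (U*)ⁿUᵐ`, `a` is
scalable, `∂̄(a)` extends to a bounded operator `b`, and `∫_{D_q} b` equals the contour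
integral `(2πi)⁻¹ ∮_{|ζ|=1} σ(a)(ζ) dζ` of the symbol `σ(a)(ζ) = Σ c(n,m) ζ^{m−n}`. -/
theorem stmt12 (q : ℝ) (hq0 : 0 < q) (hq1 : q < 1)
    (U : H →L[ℂ] H)
    (hU : ∀ n : ℕ, U (e n) = (Real.sqrt (1 - q ^ (n + 1)) : ℂ) • e (n + 1))
    (j : H →L[ℂ] H)
    (hj : ∀ n : ℕ, j (e n) = ((q : ℂ) ^ n) • e n)
    (hjinj : Function.Injective (⇑j))
    (c : ℕ × ℕ →₀ ℂ)
    (a : H →L[ℂ] H)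
    (ha : a = ∑ p ∈ c.support, c p • ((ContinuousLinearMap.adjoint U) ^ p.1 * U ^ p.2)) :
    ∃ Ja b : H →L[ℂ] H,
      a.comp j = j.comp Ja ∧
      (∀ φ ∈ Set.range (⇑j), b φ = dbar q U j (a φ) - Ja (dbar q U j φ)) ∧
      intDq q b = (2 * Real.pi * Complex.I)⁻¹ *
        (∮ ζ in C((0 : ℂ), 1), ∑ p ∈ c.support, c p * ζ ^ ((p.2 : ℤ) - p.1)) := by
  classical
  set V := ContinuousLinearMap.adjoint U with hV
  have hjU := jU hq0 hq1 U j hU hj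
  have hVj := Vj hq0 hq1 U j hU hj
  have hVU := VU hq0 hq1 U j hU hj
  have hUV := UV hq0 hq1 U j hU hj
  set κ : ℂ := (q : ℂ)⁻¹ * ((q : ℂ) - 1)⁻¹ with hκ
  set Ja : H →L[ℂ] H := ∑ p ∈ c.support,
    (c p * ((q:ℂ)^p.1 * ((q:ℂ)^p.2)⁻¹)) • (V^p.1 * U^p.2) with hJa
  set b : H →L[ℂ] H := ∑ p ∈ c.support,
    (c p * (∑ i ∈ Finset.range p.1, (q:ℂ)^i)) • (V^(p.1-1) * U^p.2) with hb
  have hcomp : a * j = j * Ja := by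
    rw [ha, hJa, Finset.sum_mul, Finset.mul_sum]
    refine Finset.sum_congr rfl fun p hp => ?_
    rw [smul_mul_assoc, mul_smul_comm, monoJ hq0 U j V hjU hVj p.1 p.2, smul_smul]
  have hbj : b * j = κ • (U * Ja - Ja * U) := by
    have hdiff : U * Ja - Ja * U = ∑ p ∈ c.support,
        (c p * ((q:ℂ)^p.1 * ((q:ℂ)^p.2)⁻¹)) • (U * (V^p.1*U^p.2) - (V^p.1*U^p.2) * U) := by
      rw [hJa, Finset.mul_sum, Finset.sum_mul, ← Finset.sum_sub_distrib]
      refine Finset.sum_congr rfl fun p hp => ?_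
      rw [mul_smul_comm, smul_mul_assoc, smul_sub]
    rw [hdiff, Finset.smul_sum, hb, Finset.sum_mul]
    refine Finset.sum_congr rfl fun p hp => ?_
    rw [smul_mul_assoc, mul_smul (c p), bmono hq0 hq1 U j V hjU hVj hVU hUV p.1 p.2,
      smul_smul, smul_smul]
    congr 1
    rw [hκ]
    ring
  refine ⟨Ja, b, ?_, ?_, ?_⟩
  · rw [← ContinuousLinearMap.mul_def, ← ContinuousLinearMap.mul_def]
    exact hcomp
  · rintro φ ⟨ψ, rfl⟩
    have hinv : Function.invFun (⇑j) (j ψ) = ψ := Function.leftInverse_invFun hjinj ψ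
    have haj : a (j ψ) = j (Ja ψ) := by
      have := congrArg (fun T : H →L[ℂ] H => T ψ) hcomp
      simpa using this
    have hinv2 : Function.invFun (⇑j) (j (Ja ψ)) = Ja ψ := Function.leftInverse_invFun hjinj _
    have hbψ : b (j ψ) = κ • (U (Ja ψ) - Ja (U ψ)) := by
      have := congrArg (fun T : H →L[ℂ] H => T ψ) hbj
      simpa using this
    rw [hbψ, dbar, dbar, haj, hinv2, hinv, _root_.map_smul, smul_sub, hκ]
  · -- the integral computation
    have hpi : (2 * (Real.pi:ℂ) * Complex.I) ≠ 0 := by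
      simp [Real.pi_ne_zero, Complex.I_ne_zero, Complex.ofReal_ne_zero]
    -- diagonal entries of b
    have hdiag : ∀ k : ℕ, (inner ℂ (e k) (b (e k)) : ℂ)
        = ∑ p ∈ c.support, (if p.1 = p.2 + 1 then
            c p * (∑ i ∈ Finset.range p.1, (q:ℂ)^i)
              * ((∏ i ∈ Finset.range p.2, (1 - q^(k+i+1)) : ℝ) : ℂ) else 0) := by
      intro k
      rw [hb, ContinuousLinearMap.sum_apply, inner_sum]
      refine Finset.sum_congr rfl fun p hp => ?_
      rw [ContinuousLinearMap.smul_apply, inner_smul_right,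
        diag_inner hq0 hq1 U hU (p.1-1) p.2 k]
      rcases p with ⟨n, m⟩
      rcases n with _ | s
      · simp
      · simp only [Nat.add_sub_cancel]
        rcases eq_or_ne s m with rfl | hne
        · rw [if_pos rfl, if_pos rfl, mul_assoc]
        · rw [if_neg hne, if_neg (by omega), mul_zero]
    -- value of each summand after tsum
    have hsummand : ∀ p : ℕ × ℕ,
        Summable (fun k : ℕ => (q:ℂ)^k * (if p.1 = p.2 + 1 then
            c p * (∑ i ∈ Finset.range p.1, (q:ℂ)^i)
              * ((∏ i ∈ Finset.range p.2, (1 - q^(k+i+1)) : ℝ) : ℂ) else 0)) ∧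
        ((1 - q : ℝ) : ℂ) * (∑' k : ℕ, (q:ℂ)^k * (if p.1 = p.2 + 1 then
            c p * (∑ i ∈ Finset.range p.1, (q:ℂ)^i)
              * ((∏ i ∈ Finset.range p.2, (1 - q^(k+i+1)) : ℝ) : ℂ) else 0))
          = (if p.1 = p.2 + 1 then c p else 0) := by
      intro p
      rcases eq_or_ne p.1 (p.2 + 1) with hcond | hcond
      · simp only [if_pos hcond]
        have hts : HasSum (fun k : ℕ => (q:ℂ)^k
            * ((∏ i ∈ Finset.range p.2, (1 - q^(k+i+1)) : ℝ) : ℂ))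
            (((1 - q^(p.2+1))⁻¹ : ℝ) : ℂ) := by
          have h0 := Complex.ofRealCLM.hasSum (telescope_hasSum hq0 hq1 p.2)
          simp only [Complex.ofRealCLM_apply, Complex.ofReal_mul, Complex.ofReal_pow] at h0
          exact h0
        have hts2 : HasSum (fun k : ℕ => (q:ℂ)^k * (c p * (∑ i ∈ Finset.range p.1, (q:ℂ)^i)
              * ((∏ i ∈ Finset.range p.2, (1 - q^(k+i+1)) : ℝ) : ℂ)))
            ((c p * (∑ i ∈ Finset.range p.1, (q:ℂ)^i)) * (((1 - q^(p.2+1))⁻¹ : ℝ) : ℂ)) := by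
          have h1 := hts.mul_left (c p * (∑ i ∈ Finset.range p.1, (q:ℂ)^i))
          have hfun : (fun k : ℕ => (q:ℂ)^k * (c p * (∑ i ∈ Finset.range p.1, (q:ℂ)^i)
              * ((∏ i ∈ Finset.range p.2, (1 - q^(k+i+1)) : ℝ) : ℂ)))
              = fun k : ℕ => (c p * (∑ i ∈ Finset.range p.1, (q:ℂ)^i))
                * ((q:ℂ)^k * ((∏ i ∈ Finset.range p.2, (1 - q^(k+i+1)) : ℝ) : ℂ)) := by
            funext k; ring
          rw [hfun]
          exact h1
        constructor
        · exact hts2.summable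
        · rw [hts2.tsum_eq, hcond]
          have hne1 : ((1:ℂ) - (q:ℂ)^(p.2+1)) ≠ 0 := by
            have : (1 - q^(p.2+1)) ≠ 0 := by
              have : q ^ (p.2+1) < 1 := pow_lt_one₀ hq0.le hq1 (by omega)
              linarith
            simpa [← Complex.ofReal_pow, ← Complex.ofReal_one, ← Complex.ofReal_sub,
              Complex.ofReal_ne_zero] using this
          have hgeom : ((1:ℂ) - (q:ℂ)) * (∑ i ∈ Finset.range (p.2+1), (q:ℂ)^i)
              = 1 - (q:ℂ)^(p.2+1) := by
            have := geom_sum_mul ((q:ℂ)) (p.2+1)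
            linear_combination -this
          have hcast : (((1 - q^(p.2+1))⁻¹ : ℝ) : ℂ) = ((1:ℂ) - (q:ℂ)^(p.2+1))⁻¹ := by
            push_cast; ring
          have hq1c : ((1 - q : ℝ) : ℂ) = 1 - (q:ℂ) := by push_cast; ring
          rw [hcast, hq1c]
          calc (1 - (q:ℂ)) * (c p * (∑ i ∈ Finset.range (p.2+1), (q:ℂ)^i)
                * ((1:ℂ) - (q:ℂ)^(p.2+1))⁻¹)
              = (c p * (((1:ℂ) - (q:ℂ)) * (∑ i ∈ Finset.range (p.2+1), (q:ℂ)^i)))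
                * ((1:ℂ) - (q:ℂ)^(p.2+1))⁻¹ := by ring
            _ = (c p * ((1:ℂ) - (q:ℂ)^(p.2+1))) * ((1:ℂ) - (q:ℂ)^(p.2+1))⁻¹ := by rw [hgeom]
            _ = c p := by rw [mul_assoc, mul_inv_cancel₀ hne1, mul_one]
      · simp only [if_neg hcond, mul_zero]
        exact ⟨summable_zero, by simp⟩
    -- put together LHS
    have hLHS : intDq q b = ∑ p ∈ c.support, (if p.1 = p.2 + 1 then c p else 0) := by
      rw [intDq]
      have := Summable.tsum_finsetSum (f := fun (p : ℕ × ℕ) (k : ℕ) => (q:ℂ)^k * (if p.1 = p.2 + 1 then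
            c p * (∑ i ∈ Finset.range p.1, (q:ℂ)^i)
              * ((∏ i ∈ Finset.range p.2, (1 - q^(k+i+1)) : ℝ) : ℂ) else 0))
        (s := c.support) (fun p _ => (hsummand p).1)
      rw [show (∑' k : ℕ, ((q : ℂ) ^ k) * (inner ℂ (e k) (b (e k)) : ℂ))
          = ∑' k : ℕ, ∑ p ∈ c.support, (q:ℂ)^k * (if p.1 = p.2 + 1 then
            c p * (∑ i ∈ Finset.range p.1, (q:ℂ)^i)
              * ((∏ i ∈ Finset.range p.2, (1 - q^(k+i+1)) : ℝ) : ℂ) else 0) from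
          tsum_congr fun k => by rw [hdiag k, Finset.mul_sum], this, Finset.mul_sum]
      exact Finset.sum_congr rfl fun p hp => (hsummand p).2
    -- RHS
    have hRHS : (2 * (Real.pi:ℂ) * Complex.I)⁻¹ *
        (∮ ζ in C((0 : ℂ), 1), ∑ p ∈ c.support, c p * ζ ^ ((p.2 : ℤ) - p.1))
        = ∑ p ∈ c.support, (if p.1 = p.2 + 1 then c p else 0) := by
      rw [circInt_sum, Finset.mul_sum]
      refine Finset.sum_congr rfl fun p hp => ?_
      rw [circInt_zpow]
      rcases eq_or_ne ((p.2 : ℤ) - p.1) (-1) with hc1 | hc1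
      · rw [if_pos hc1, if_pos (by omega), mul_comm, mul_assoc, mul_inv_cancel₀ hpi, mul_one]
      · rw [if_neg hc1, if_neg (by omega), mul_zero, mul_zero]
    rw [hLHS, ← hRHS]

end
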